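/- For n ≥ 1, the symmetric function q_n defined by the generating series Π_{i} (1+z a_i)/(1-z a_i) = Σ_n q_n z^n satisfies q_n = Σ_{μ odd, |μ|=n} z_μ^{-1} 2^{ℓ(μ)} p_μ, where the sum is over partitions μ of n with all parts odd, p_μ is the power-sum product, ℓ(μ) is the number of parts, and z_μ = Π_i i^{m_i(μ)} m_i(μ)!. -/

import Mathlib

open Classical

noncomputable section Aux

/-- z_μ as a rational number, for a multiset of parts. -/
def Zmul (s : Multiset ℕ) : ℚ :=
  ∏ i ∈ s.toFinset, ((i : ℚ) ^ (s.count i) * (Nat.factorial (s.count i)))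

lemma Zmul_zero : Zmul 0 = 1 := by simp [Zmul]

lemma Zmul_cons (k : ℕ) (t : Multiset ℕ) :
    Zmul (k ::ₘ t) = (k : ℚ) * (t.count k + 1) * Zmul t := by
  classical
  unfold Zmul
  by_cases hk : k ∈ t
  · have htf : (k ::ₘ t).toFinset = t.toFinset := by
      ext a; simp [Multiset.mem_toFinset, Multiset.mem_cons]
      intro ha; subst ha; exact hk
    have hkf : k ∈ t.toFinset := Multiset.mem_toFinset.2 hk
    rw [htf, ← Finset.mul_prod_erase _ _ hkf, ← Finset.mul_prod_erase _ _ hkf]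
    have hcount : (k ::ₘ t).count k = t.count k + 1 := by simp
    have hrest : ∏ i ∈ t.toFinset.erase k,
        ((i : ℚ) ^ ((k ::ₘ t).count i) * (Nat.factorial ((k ::ₘ t).count i))) =
        ∏ i ∈ t.toFinset.erase k,
        ((i : ℚ) ^ (t.count i) * (Nat.factorial (t.count i))) := by
      apply Finset.prod_congr rfl
      intro i hi
      have : i ≠ k := Finset.ne_of_mem_erase hi
      rw [Multiset.count_cons_of_ne this]
    rw [hrest, hcount]
    push_cast [Nat.factorial_succ]
    ring
  · have hc0 : t.count k = 0 := Multiset.count_eq_zero.2 hk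
    have hkf : k ∉ t.toFinset := by simp [Multiset.mem_toFinset, hk]
    have htf : (k ::ₘ t).toFinset = insert k t.toFinset := by
      ext a; simp [Multiset.mem_toFinset, Multiset.mem_cons]
    rw [htf, Finset.prod_insert hkf]
    have hcount : (k ::ₘ t).count k = 1 := by simp [hc0]
    have hrest : ∏ i ∈ t.toFinset,
        ((i : ℚ) ^ ((k ::ₘ t).count i) * (Nat.factorial ((k ::ₘ t).count i))) =
        ∏ i ∈ t.toFinset,
        ((i : ℚ) ^ (t.count i) * (Nat.factorial (t.count i))) := by
      apply Finset.prod_congr rfl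
      intro i hi
      have : i ≠ k := by rintro rfl; exact hkf hi
      rw [Multiset.count_cons_of_ne this]
    rw [hrest, hcount, hc0]
    push_cast [Nat.factorial_one]
    ring

lemma Zmul_ne_zero {s : Multiset ℕ} (hs : ∀ i ∈ s, 0 < i) : Zmul s ≠ 0 := by
  unfold Zmul
  apply Finset.prod_ne_zero_iff.2
  intro i hi
  have hi' : 0 < i := hs i (Multiset.mem_toFinset.1 hi)
  positivity

end Aux
open PowerSeries

noncomputable section PS

variable {A : Type*} [CommRing A]

/-- geometric series -/
lemma geom_inv (a : A) :
    (1 - PowerSeries.C a * PowerSeries.X) * PowerSeries.mk (fun m => a ^ m) = 1 := by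
  ext n
  rw [sub_mul, one_mul, map_sub]
  cases n with
  | zero => simp
  | succ n =>
    rw [mul_assoc, PowerSeries.coeff_C_mul, PowerSeries.coeff_succ_X_mul,
      PowerSeries.coeff_mk, PowerSeries.coeff_mk, PowerSeries.coeff_one]
    simp [pow_succ, mul_comm]

lemma S_eq (a : A) (S : PowerSeries A)
    (hS : (1 - PowerSeries.C a * PowerSeries.X) * S = 1) :
    S = PowerSeries.mk (fun m => a ^ m) := by
  have h1 := geom_inv a
  calc S = ((1 - PowerSeries.C a * PowerSeries.X) * PowerSeries.mk (fun m => a ^ m)) * S := by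
        rw [h1, one_mul]
    _ = PowerSeries.mk (fun m => a ^ m) * ((1 - PowerSeries.C a * PowerSeries.X) * S) := by ring
    _ = PowerSeries.mk (fun m => a ^ m) := by rw [hS, mul_one]

end PS

noncomputable section PS2

open Classical

variable {A : Type*} [CommRing A]

/-- coefficientwise series of odd power terms: `Σ_{k odd} 2 a^k z^{k-1}`. -/
def oddSeries (a : A) : PowerSeries A :=
  PowerSeries.mk fun m => if Odd (m + 1) then 2 * a ^ (m + 1) else 0

lemma oddSeries_key (a : A) :
    (1 - PowerSeries.C (a * a) * PowerSeries.X ^ 2) * oddSeries a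
      = PowerSeries.C (2 * a) := by
  ext m
  rw [sub_mul, one_mul, map_sub, mul_assoc, PowerSeries.coeff_C_mul, PowerSeries.coeff_C]
  match m with
  | 0 =>
    rw [PowerSeries.coeff_X_pow_mul' (oddSeries a) 2 0]
    simp [oddSeries, PowerSeries.coeff_mk]
  | 1 =>
    rw [PowerSeries.coeff_X_pow_mul' (oddSeries a) 2 1]
    have h2 : ¬ Odd 2 := by decide
    simp [oddSeries, PowerSeries.coeff_mk, h2]
  | (m + 2) =>
    rw [PowerSeries.coeff_X_pow_mul (oddSeries a) 2 m]
    simp only [oddSeries, PowerSeries.coeff_mk]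
    have hpar : Odd (m + 2 + 1) ↔ Odd (m + 1) := by
      constructor <;> intro h
      · rcases h with ⟨j, hj⟩; exact ⟨j - 1, by omega⟩
      · rcases h with ⟨j, hj⟩; exact ⟨j + 1, by omega⟩
    rw [if_neg (by omega : ¬ (m + 2 = 0))]
    by_cases h : Odd (m + 1)
    · rw [if_pos (hpar.2 h), if_pos h]
      rw [show m + 2 + 1 = (m + 1) + 1 + 1 by ring, pow_succ, pow_succ]
      ring
    · rw [if_neg (fun hh => h (hpar.1 hh)), if_neg h]
      simp

lemma C_two_mul (a : A) : PowerSeries.C (2 * a) = 2 * PowerSeries.C a := by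
  rw [map_mul, map_ofNat]

lemma geom_inv_neg (a : A) :
    (1 + PowerSeries.C a * PowerSeries.X) * PowerSeries.mk (fun m => (-a) ^ m) = 1 := by
  have h := geom_inv (-a)
  rwa [map_neg, neg_mul, sub_neg_eq_add] at h

lemma oddSeries_eq (a : A) :
    oddSeries a = PowerSeries.C (2 * a) *
      (PowerSeries.mk (fun m => a ^ m) * PowerSeries.mk (fun m => (-a) ^ m)) := by
  have h1 := geom_inv a
  have h2 := geom_inv_neg a
  have hfac : (1 - PowerSeries.C a * PowerSeries.X) *
      (1 + PowerSeries.C a * PowerSeries.X)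
      = 1 - PowerSeries.C (a * a) * PowerSeries.X ^ 2 := by
    rw [map_mul]; ring
  calc oddSeries a
      = ((1 - PowerSeries.C a * PowerSeries.X) * PowerSeries.mk (fun m => a ^ m)) *
        (((1 + PowerSeries.C a * PowerSeries.X) * PowerSeries.mk (fun m => (-a) ^ m)) *
          oddSeries a) := by rw [h1, h2, one_mul, one_mul]
    _ = (PowerSeries.mk (fun m => a ^ m) * PowerSeries.mk (fun m => (-a) ^ m)) *
        (((1 - PowerSeries.C a * PowerSeries.X) *
          (1 + PowerSeries.C a * PowerSeries.X)) * oddSeries a) := by ring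
    _ = PowerSeries.C (2 * a) *
        (PowerSeries.mk (fun m => a ^ m) * PowerSeries.mk (fun m => (-a) ^ m)) := by
        rw [hfac, oddSeries_key]; ring

lemma deriv_one_add (a : A) :
    (PowerSeries.derivative A) (1 + PowerSeries.C a * PowerSeries.X) = PowerSeries.C a := by
  rw [map_add, Derivation.map_one_eq_zero, zero_add, Derivation.leibniz,
    PowerSeries.derivative_X, PowerSeries.derivative_C, smul_eq_mul, smul_eq_mul]
  ring

lemma deriv_geom (a : A) :
    (PowerSeries.derivative A) (PowerSeries.mk (fun m => a ^ m))
      = PowerSeries.C a *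
        (PowerSeries.mk (fun m => a ^ m) * PowerSeries.mk (fun m => a ^ m)) := by
  set M := PowerSeries.mk (fun m => a ^ m) with hM
  have h1 : (1 - PowerSeries.C a * PowerSeries.X) * M = 1 := geom_inv a
  have h := congrArg (PowerSeries.derivative A) h1
  rw [Derivation.leibniz, Derivation.map_one_eq_zero, map_sub, Derivation.map_one_eq_zero,
    Derivation.leibniz, PowerSeries.derivative_X, PowerSeries.derivative_C,
    smul_eq_mul, smul_eq_mul, smul_eq_mul, smul_eq_mul] at h
  -- h : (1 - C a * X) * D M + M * (0 - (C a * 1 + X * 0)) = 0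
  have h' : (1 - PowerSeries.C a * PowerSeries.X) * (PowerSeries.derivative A M)
      = PowerSeries.C a * M := by linear_combination h
  calc (PowerSeries.derivative A) M
      = ((1 - PowerSeries.C a * PowerSeries.X) * M) * (PowerSeries.derivative A M) := by
        rw [h1, one_mul]
    _ = M * ((1 - PowerSeries.C a * PowerSeries.X) * (PowerSeries.derivative A M)) := by ring
    _ = PowerSeries.C a * (M * M) := by rw [h']; ring

lemma deriv_factor (a : A) :
    (PowerSeries.derivative A)
        ((1 + PowerSeries.C a * PowerSeries.X) * PowerSeries.mk (fun m => a ^ m))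
      = ((1 + PowerSeries.C a * PowerSeries.X) * PowerSeries.mk (fun m => a ^ m)) *
          oddSeries a := by
  set M := PowerSeries.mk (fun m => a ^ m) with hM
  have h1 : (1 - PowerSeries.C a * PowerSeries.X) * M = 1 := geom_inv a
  have h2 := geom_inv_neg a
  rw [Derivation.leibniz, deriv_one_add, deriv_geom, smul_eq_mul, smul_eq_mul, oddSeries_eq]
  calc (1 + PowerSeries.C a * PowerSeries.X) * (PowerSeries.C a * (M * M)) +
        M * PowerSeries.C a
      = PowerSeries.C a * (M * M) * (1 + PowerSeries.C a * PowerSeries.X) +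
        PowerSeries.C a * M * (1 : A⟦X⟧) := by ring
    _ = PowerSeries.C a * (M * M) * (1 + PowerSeries.C a * PowerSeries.X) +
        PowerSeries.C a * M * ((1 - PowerSeries.C a * PowerSeries.X) * M) := by rw [h1]
    _ = PowerSeries.C (2 * a) * (M * M) := by rw [C_two_mul]; ring
    _ = PowerSeries.C (2 * a) * (M * M) *
        ((1 + PowerSeries.C a * PowerSeries.X) * PowerSeries.mk (fun m => (-a) ^ m)) := by
        rw [h2, mul_one]
    _ = (1 + PowerSeries.C a * PowerSeries.X) * M *
        (PowerSeries.C (2 * a) * (M * PowerSeries.mk (fun m => (-a) ^ m))) := by ring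

lemma deriv_prod {ι : Type*} (s : Finset ι) (f : ι → PowerSeries A) :
    (PowerSeries.derivative A) (∏ i ∈ s, f i)
      = ∑ i ∈ s, (∏ j ∈ s.erase i, f j) * (PowerSeries.derivative A) (f i) := by
  classical
  induction s using Finset.induction_on with
  | empty => simp [Derivation.map_one_eq_zero]
  | insert x t hx ih =>
    rw [Finset.prod_insert hx, Derivation.leibniz, smul_eq_mul, smul_eq_mul, ih,
      Finset.sum_insert hx, Finset.mul_sum]
    rw [Finset.erase_insert hx]
    have : ∀ i ∈ t, (∏ j ∈ (insert x t).erase i, f j) * (PowerSeries.derivative A) (f i)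
        = f x * ((∏ j ∈ t.erase i, f j) * (PowerSeries.derivative A) (f i)) := by
      intro i hi
      have hxi : x ≠ i := by rintro rfl; exact hx hi
      rw [Finset.erase_insert_of_ne (Ne.symm hxi).symm]
      · rw [Finset.prod_insert (by simp [hx])]
        ring
    rw [Finset.sum_congr rfl this]
    ring

lemma deriv_prod_eq {ι : Type*} (s : Finset ι) (f g : ι → PowerSeries A)
    (h : ∀ i ∈ s, (PowerSeries.derivative A) (f i) = f i * g i) :
    (PowerSeries.derivative A) (∏ i ∈ s, f i) = (∏ i ∈ s, f i) * ∑ i ∈ s, g i := by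
  classical
  rw [deriv_prod, Finset.mul_sum]
  apply Finset.sum_congr rfl
  intro i hi
  rw [h i hi, ← mul_assoc, Finset.prod_erase_mul _ _ hi]

lemma coeff_rec (F G : PowerSeries A) (h : (PowerSeries.derivative A) F = F * G)
    (n : ℕ) (hn : 1 ≤ n) :
    (n : A) * PowerSeries.coeff n F
      = ∑ v ∈ Finset.range n, PowerSeries.coeff v G * PowerSeries.coeff (n - 1 - v) F := by
  have hn1 : n - 1 + 1 = n := by omega
  have h1 : PowerSeries.coeff (n - 1) ((PowerSeries.derivative A) F)
      = PowerSeries.coeff n F * n := by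
    rw [PowerSeries.coeff_derivative, hn1]
    congr 1
    rw [← hn1]
    push_cast
    ring
  have h2 : PowerSeries.coeff (n - 1) (F * G)
      = ∑ v ∈ Finset.range n, PowerSeries.coeff v G * PowerSeries.coeff (n - 1 - v) F := by
    rw [mul_comm, PowerSeries.coeff_mul, Finset.Nat.sum_antidiagonal_eq_sum_range_succ_mk,
      Nat.succ_eq_add_one, hn1]
  rw [h, h2] at h1
  rw [h1, mul_comm]

end PS2

noncomputable section Part

open Classical MvPolynomial

/-- every part of a partition of `n` is at most `n`. -/
lemma part_le {n : ℕ} (μ : Nat.Partition n) {x : ℕ} (hx : x ∈ μ.parts) : x ≤ n := by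
  have h : x + (μ.parts.erase x).sum = μ.parts.sum := by
    rw [← Multiset.cons_erase hx, Multiset.sum_cons]
    simp [Multiset.cons_erase hx]
  rw [μ.parts_sum] at h
  omega

lemma parts_of_zero (μ : Nat.Partition 0) : μ.parts = 0 := by
  apply Multiset.eq_zero_of_forall_notMem
  intro x hx
  have h1 := μ.parts_pos hx
  have h2 := part_le μ hx
  omega

lemma psumPart_eq (N : ℕ) {m : ℕ} (ρ : Nat.Partition m) :
    MvPolynomial.psumPart (Fin N) ℚ ρ = (ρ.parts.map (MvPolynomial.psum (Fin N) ℚ)).prod := rfl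

/-- the partition-indexed right-hand side. -/
def rpart (N n : ℕ) : MvPolynomial (Fin N) ℚ :=
  ∑ μ ∈ Finset.univ.filter (fun μ : Nat.Partition n => ∀ i ∈ μ.parts, Odd i),
    (((Zmul μ.parts)⁻¹ * 2 ^ (Multiset.card μ.parts)) • MvPolynomial.psumPart (Fin N) ℚ μ)

lemma rpart_zero (N : ℕ) : rpart N 0 = 1 := by
  classical
  rw [rpart]
  rw [Finset.filter_true_of_mem (fun μ _ => by
    intro i hi; rw [parts_of_zero μ] at hi; exact absurd hi (Multiset.notMem_zero i))]
  rw [Finset.univ_unique, Finset.sum_singleton]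
  have hp : (default : Nat.Partition 0).parts = 0 := parts_of_zero _
  rw [psumPart_eq, hp]
  simp [Zmul_zero]

lemma rpart_rec (N n : ℕ) (hn : 1 ≤ n) :
    (n : MvPolynomial (Fin N) ℚ) * rpart N n
      = ∑ v ∈ Finset.range n,
          (if Odd (v + 1) then 2 * MvPolynomial.psum (Fin N) ℚ (v + 1) else 0)
            * rpart N (n - 1 - v) := by
  classical
  have hns : ∀ (c : ℚ) (P : MvPolynomial (Fin N) ℚ),
      (n : MvPolynomial (Fin N) ℚ) * (c • P) = ((n : ℚ) * c) • P := by
    intro c P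
    simp only [Algebra.smul_def, map_mul, map_natCast]
    ring
  have h2s : ∀ (c : ℚ) (P : MvPolynomial (Fin N) ℚ), (c * 2) • P = c • (2 * P) := by
    intro c P
    simp only [Algebra.smul_def, map_mul, map_ofNat]
    ring
  -- LHS rewriting
  have lhs_eq : (n : MvPolynomial (Fin N) ℚ) * rpart N n
      = ∑ x ∈ (Finset.univ.filter
            (fun μ : Nat.Partition n => ∀ i ∈ μ.parts, Odd i)).sigma
            (fun μ => μ.parts.toFinset),
          (((x.2 : ℚ) * (x.1.parts.count x.2)) *
            ((Zmul x.1.parts)⁻¹ * 2 ^ (Multiset.card x.1.parts)))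
            • MvPolynomial.psumPart (Fin N) ℚ x.1 := by
    rw [rpart, Finset.mul_sum, Finset.sum_sigma]
    apply Finset.sum_congr rfl
    intro μ hμ
    dsimp only
    rw [hns, ← Finset.sum_smul]
    congr 1
    rw [← Finset.sum_mul]
    congr 1
    have h0 : μ.parts.sum = ∑ k ∈ μ.parts.toFinset, μ.parts.count k • k := by
      conv_lhs => rw [← Multiset.map_id μ.parts]
      exact Finset.sum_multiset_map_count μ.parts id
    rw [μ.parts_sum] at h0
    have h0' := congrArg (Nat.cast : ℕ → ℚ) h0
    push_cast [smul_eq_mul] at h0'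
    rw [h0']
    apply Finset.sum_congr rfl
    intro k _
    ring
  -- RHS rewriting
  have rhs_eq : (∑ v ∈ Finset.range n,
        (if Odd (v + 1) then 2 * MvPolynomial.psum (Fin N) ℚ (v + 1) else 0)
          * rpart N (n - 1 - v))
      = ∑ x ∈ ((Finset.range n).filter (fun v => Odd (v + 1))).sigma
            (fun v => Finset.univ.filter
              (fun ρ : Nat.Partition (n - 1 - v) => ∀ i ∈ ρ.parts, Odd i)),
          (((Zmul x.2.parts)⁻¹ * 2 ^ (Multiset.card x.2.parts)))
            • (2 * MvPolynomial.psum (Fin N) ℚ (x.1 + 1)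
                * MvPolynomial.psumPart (Fin N) ℚ x.2) := by
    rw [Finset.sum_sigma, Finset.sum_filter]
    apply Finset.sum_congr rfl
    intro v _
    by_cases hv : Odd (v + 1)
    · rw [if_pos hv, if_pos hv, rpart, Finset.mul_sum]
      apply Finset.sum_congr rfl
      intro ρ _
      rw [mul_smul_comm, mul_assoc]
    · rw [if_neg hv, if_neg hv, zero_mul]
  rw [lhs_eq, rhs_eq]
  -- the bijection
  refine Finset.sum_bij'
    (fun x hx => ⟨x.2 - 1, ⟨x.1.parts.erase x.2, fun hi => x.1.parts_pos
        (Multiset.mem_of_mem_erase hi), by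
      rw [Finset.mem_sigma] at hx
      have hmem : x.2 ∈ x.1.parts := Multiset.mem_toFinset.1 hx.2
      have hpos : 0 < x.2 := x.1.parts_pos hmem
      have hsum : x.2 + (x.1.parts.erase x.2).sum = x.1.parts.sum := by
        conv_rhs => rw [← Multiset.cons_erase hmem]
        rw [Multiset.sum_cons]
      have h2 := x.1.parts_sum
      omega⟩⟩)
    (fun y hy => ⟨⟨(y.1 + 1) ::ₘ y.2.parts, fun hi => by
      rcases Multiset.mem_cons.1 hi with h | h
      · omega
      · exact y.2.parts_pos h, by
      rw [Finset.mem_sigma, Finset.mem_filter, Finset.mem_range] at hy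
      rw [Multiset.sum_cons, y.2.parts_sum]
      omega⟩, y.1 + 1⟩)
    ?_ ?_ ?_ ?_ ?_
  · -- forward map lands in target
    intro x hx
    rw [Finset.mem_sigma] at hx
    have hodd := (Finset.mem_filter.1 hx.1).2
    have hmem : x.2 ∈ x.1.parts := Multiset.mem_toFinset.1 hx.2
    have hpos : 0 < x.2 := x.1.parts_pos hmem
    have hle : x.2 ≤ n := part_le x.1 hmem
    rw [Finset.mem_sigma]
    constructor
    · rw [Finset.mem_filter, Finset.mem_range]
      constructor
      · show x.2 - 1 < n
        omega
      · show Odd (x.2 - 1 + 1)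
        rw [show x.2 - 1 + 1 = x.2 by omega]
        exact hodd x.2 hmem
    · rw [Finset.mem_filter]
      exact ⟨Finset.mem_univ _, fun i hi => hodd i (Multiset.mem_of_mem_erase hi)⟩
  · -- backward map lands in source
    intro y hy
    rw [Finset.mem_sigma, Finset.mem_filter, Finset.mem_range] at hy
    rw [Finset.mem_sigma]
    constructor
    · rw [Finset.mem_filter]
      refine ⟨Finset.mem_univ _, fun i hi => ?_⟩
      rcases Multiset.mem_cons.1 hi with h | h
      · rw [h]; exact hy.1.2
      · exact (Finset.mem_filter.1 hy.2).2 i h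
    · rw [Multiset.mem_toFinset]
      exact Multiset.mem_cons_self _ _
  · -- left inverse
    intro x hx
    dsimp only
    rw [Finset.mem_sigma] at hx
    have hmem : x.2 ∈ x.1.parts := Multiset.mem_toFinset.1 hx.2
    have hpos : 0 < x.2 := x.1.parts_pos hmem
    have hk : x.2 - 1 + 1 = x.2 := by omega
    refine Sigma.ext (Nat.Partition.ext ?_) (heq_of_eq ?_)
    · show (x.2 - 1 + 1) ::ₘ x.1.parts.erase x.2 = x.1.parts
      rw [hk]
      exact Multiset.cons_erase hmem
    · exact hk
  · -- right inverse
    intro y hy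
    dsimp only
    refine Sigma.ext (by simp) (heq_of_eq ?_)
    show (⟨((y.1 + 1) ::ₘ y.2.parts).erase (y.1 + 1), _, _⟩ : Nat.Partition _) = y.2
    apply Nat.Partition.ext
    exact Multiset.erase_cons_head _ _
  · -- values agree
    intro x hx
    dsimp only
    rw [Finset.mem_sigma] at hx
    have hmem : x.2 ∈ x.1.parts := Multiset.mem_toFinset.1 hx.2
    have hpos : 0 < x.2 := x.1.parts_pos hmem
    have hk : x.2 - 1 + 1 = x.2 := by omega
    set er := x.1.parts.erase x.2 with her
    have hparts : x.1.parts = x.2 ::ₘ er := (Multiset.cons_erase hmem).symm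
    have hZ : Zmul x.1.parts = (x.2 : ℚ) * (er.count x.2 + 1) * Zmul er := by
      rw [hparts, Zmul_cons]
    have hcount : x.1.parts.count x.2 = er.count x.2 + 1 := by
      conv_lhs => rw [hparts]
      rw [Multiset.count_cons_self]
    have hcard : Multiset.card x.1.parts = Multiset.card er + 1 := by
      rw [hparts, Multiset.card_cons]
    have hZer : Zmul er ≠ 0 :=
      Zmul_ne_zero (fun i hi => x.1.parts_pos (Multiset.mem_of_mem_erase hi))
    have hscal : ((x.2 : ℚ) * (x.1.parts.count x.2)) *
          ((Zmul x.1.parts)⁻¹ * 2 ^ (Multiset.card x.1.parts))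
        = (((Zmul er)⁻¹ * 2 ^ (Multiset.card er)) * 2) := by
      rw [hZ, hcount, hcard]
      have hk0 : (x.2 : ℚ) ≠ 0 := by positivity
      have hc0 : ((er.count x.2 : ℚ) + 1) ≠ 0 := by positivity
      push_cast
      field_simp
      ring
    have hP : MvPolynomial.psumPart (Fin N) ℚ x.1
        = MvPolynomial.psum (Fin N) ℚ x.2 * (er.map (MvPolynomial.psum (Fin N) ℚ)).prod := by
      rw [psumPart_eq]
      conv_lhs => rw [hparts]
      rw [Multiset.map_cons, Multiset.prod_cons]
    rw [hP, hscal, h2s, psumPart_eq, hk]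
    show _ = ((Zmul er)⁻¹ * 2 ^ Multiset.card er) •
        (2 * psum (Fin N) ℚ x.2 * (er.map (psum (Fin N) ℚ)).prod)
    rw [mul_assoc]

end Part


noncomputable section Main

open Classical MvPolynomial

lemma coeff_eq_rpart (N : ℕ) (S : Fin N → PowerSeries (MvPolynomial (Fin N) ℚ))
    (hS : ∀ i, (1 - PowerSeries.C (MvPolynomial.X i) * PowerSeries.X) * S i = 1) (m : ℕ) :
    PowerSeries.coeff m
        (∏ i, (1 + PowerSeries.C (MvPolynomial.X i) * PowerSeries.X) * S i) = rpart N m := by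
  classical
  have hF : (∏ i, (1 + PowerSeries.C (MvPolynomial.X i) * PowerSeries.X) * S i)
      = ∏ i, (1 + PowerSeries.C (MvPolynomial.X i) * PowerSeries.X)
          * PowerSeries.mk (fun m => (MvPolynomial.X i : MvPolynomial (Fin N) ℚ) ^ m) := by
    apply Finset.prod_congr rfl
    intro i _
    rw [S_eq _ _ (hS i)]
  rw [hF]
  set F := ∏ i, (1 + PowerSeries.C (MvPolynomial.X i) * PowerSeries.X)
      * PowerSeries.mk (fun m => (MvPolynomial.X i : MvPolynomial (Fin N) ℚ) ^ m) with hFdef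
  set G := ∑ i, oddSeries (MvPolynomial.X i : MvPolynomial (Fin N) ℚ) with hGdef
  have hd : (PowerSeries.derivative (MvPolynomial (Fin N) ℚ)) F = F * G :=
    deriv_prod_eq Finset.univ _ _ (fun i _ => deriv_factor (MvPolynomial.X i))
  have hq0 : PowerSeries.coeff 0 F = 1 := by
    rw [PowerSeries.coeff_zero_eq_constantCoeff, hFdef, map_prod]
    apply Finset.prod_eq_one
    intro i _
    simp [oddSeries]
  have hGcoeff : ∀ v, PowerSeries.coeff v G
      = if Odd (v + 1) then 2 * MvPolynomial.psum (Fin N) ℚ (v + 1) else 0 := by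
    intro v
    rw [hGdef, map_sum]
    by_cases hv : Odd (v + 1)
    · rw [if_pos hv]
      have : ∀ i : Fin N, PowerSeries.coeff v (oddSeries (MvPolynomial.X i : MvPolynomial (Fin N) ℚ))
          = 2 * (MvPolynomial.X i : MvPolynomial (Fin N) ℚ) ^ (v + 1) := by
        intro i
        rw [oddSeries, PowerSeries.coeff_mk, if_pos hv]
      rw [Finset.sum_congr rfl (fun i _ => this i), MvPolynomial.psum, Finset.mul_sum]
    · rw [if_neg hv]
      apply Finset.sum_eq_zero
      intro i _
      rw [oddSeries, PowerSeries.coeff_mk, if_neg hv]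
  -- strong induction
  induction m using Nat.strong_induction_on with
  | _ m ih =>
    match m with
    | 0 => rw [hq0, rpart_zero]
    | (m + 1) =>
      have hm1 : 1 ≤ m + 1 := by omega
      have hrec := coeff_rec F G hd (m + 1) hm1
      have hrec2 := rpart_rec N (m + 1) hm1
      have hsums : ∑ v ∈ Finset.range (m + 1),
            PowerSeries.coeff v G * PowerSeries.coeff (m + 1 - 1 - v) F
          = ∑ v ∈ Finset.range (m + 1),
            (if Odd (v + 1) then 2 * MvPolynomial.psum (Fin N) ℚ (v + 1) else 0)
              * rpart N (m + 1 - 1 - v) := by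
        apply Finset.sum_congr rfl
        intro v hv
        rw [hGcoeff v, ih (m + 1 - 1 - v) (by omega)]
      have h := hrec.trans (hsums.trans hrec2.symm)
      have hne : ((m + 1 : ℕ) : MvPolynomial (Fin N) ℚ) ≠ 0 := by
        exact Nat.cast_ne_zero.2 (by omega)
      exact mul_left_cancel₀ hne h

end Main

open Classical in
/-- In `N` variables, let `q_n` be defined by the generating series
`Π_i (1+z a_i)/(1-z a_i) = Σ q_n z^n` (here `S i` is the inverse of `1 - a_i z`).
Then for `n ≥ 1`,
`q_n = Σ_{μ ⊢ n, μ odd} z_μ⁻¹ 2^{ℓ(μ)} p_μ`, where the sum is over partitions of `n`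
with all parts odd, `p_μ` is the product of power sums, `ℓ(μ)` the number of parts,
and `z_μ = Π_i i^{m_i(μ)} m_i(μ)!`. -/
theorem stmt_8 (N n : ℕ) (hn : 1 ≤ n)
    (S : Fin N → PowerSeries (MvPolynomial (Fin N) ℚ))
    (hS : ∀ i, (1 - PowerSeries.C (MvPolynomial.X i) * PowerSeries.X) * S i = 1) :
    PowerSeries.coeff n
        (∏ i, (1 + PowerSeries.C (MvPolynomial.X i) * PowerSeries.X) * S i) =
      ∑ μ ∈ Finset.univ.filter (fun μ : Nat.Partition n => ∀ i ∈ μ.parts, Odd i),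
        (((∏ i ∈ μ.parts.toFinset,
              ((i : ℚ) ^ (μ.parts.count i) * (Nat.factorial (μ.parts.count i))))⁻¹ *
            2 ^ (Multiset.card μ.parts)) •
          MvPolynomial.psumPart (Fin N) ℚ μ) := by
  rw [coeff_eq_rpart N S hS n]
  rw [rpart]
  apply Finset.sum_congr rfl
  intro μ _
  congr 1
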